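/- Let Z, W, Z', W' ∈ ℂⁿ satisfy ⟨Z,W⟩ = 0, ‖Z‖ = ‖W‖, ⟨Z',W'⟩ = 0, ‖Z'‖ = ‖W'‖, and suppose Z ∧ W = Z' ∧ W' ≠ 0 in the exterior algebra of ℂⁿ (equivalently, Z_i·W_j − Z_j·W_i = Z'_i·W'_j − Z'_j·W'_i for all i, j, not all zero). Then there exists a 2×2 complex matrix g = [[g₁₁, g₁₂],[g₂₁, g₂₂]] with g·g* = 1 and det g = 1 such that Z' = g₁₁·Z + g₁₂·W and W' = g₂₁·Z + g₂₂·W. -/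

import Mathlib

/-- Two momentum-level-zero pairs `(Z,W)` and `(Z',W')` (orthogonal rows of equal norm)
with the same nonzero wedge `Z ∧ W = Z' ∧ W'` lie in the same `SU(2)`-orbit. -/
theorem momentum_zero_same_wedge_SU2_orbit (n : ℕ)
    (Z W Z' W' : EuclideanSpace ℂ (Fin n))
    (h1 : (∑ i, Z i * (starRingEnd ℂ) (W i)) = 0) (h2 : ‖Z‖ = ‖W‖)
    (h3 : (∑ i, Z' i * (starRingEnd ℂ) (W' i)) = 0) (h4 : ‖Z'‖ = ‖W'‖)
    (heq : ∀ i j, Z i * W j - Z j * W i = Z' i * W' j - Z' j * W' i)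
    (hne : ∃ i j, Z i * W j - Z j * W i ≠ 0) :
    ∃ g : Matrix (Fin 2) (Fin 2) ℂ, g * g.conjTranspose = 1 ∧ g.det = 1 ∧
      (∀ i, Z' i = g 0 0 * Z i + g 0 1 * W i) ∧
      (∀ i, W' i = g 1 0 * Z i + g 1 1 * W i) := by
  obtain ⟨i₀, j₀, hD⟩ := hne
  set D : ℂ := Z i₀ * W j₀ - Z j₀ * W i₀ with hDdef
  set a : ℂ := (Z' i₀ * W j₀ - Z' j₀ * W i₀) / D with ha
  set b : ℂ := (Z i₀ * Z' j₀ - Z j₀ * Z' i₀) / D with hb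
  set c : ℂ := (W' i₀ * W j₀ - W' j₀ * W i₀) / D with hc
  set d : ℂ := (Z i₀ * W' j₀ - Z j₀ * W' i₀) / D with hd
  -- Z' and W' lie in the plane spanned by Z and W
  have keyZ : ∀ k, Z' k = a * Z k + b * W k := by
    intro k
    have e1 := heq i₀ j₀; have e2 := heq i₀ k; have e3 := heq j₀ k
    rw [ha, hb]
    field_simp
    linear_combination Z' k * e1 + Z' i₀ * e3 - Z' j₀ * e2
  have keyW : ∀ k, W' k = c * Z k + d * W k := by
    intro k
    have e1 := heq i₀ j₀; have e2 := heq i₀ k; have e3 := heq j₀ k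
    rw [hc, hd]
    field_simp
    linear_combination W' k * e1 + W' i₀ * e3 - W' j₀ * e2
  -- determinant is 1
  have hdet : a * d - b * c = 1 := by
    rw [ha, hb, hc, hd]
    field_simp
    linear_combination (-D) * heq i₀ j₀
  have hdetc : (starRingEnd ℂ) a * (starRingEnd ℂ) d - (starRingEnd ℂ) b * (starRingEnd ℂ) c = 1 := by
    have := congrArg (starRingEnd ℂ) hdet
    simpa using this
  -- norms
  have hS : (∑ i, Z i * (starRingEnd ℂ) (Z i)) = ∑ i, W i * (starRingEnd ℂ) (W i) := by
    have e1 : (inner ℂ Z Z : ℂ) = inner ℂ W W := by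
      rw [inner_self_eq_norm_sq_to_K, inner_self_eq_norm_sq_to_K, h2]
    rw [PiLp.inner_apply, PiLp.inner_apply] at e1
    simpa only [RCLike.inner_apply, mul_comm] using e1
  have hS' : (∑ i, Z' i * (starRingEnd ℂ) (Z' i)) = ∑ i, W' i * (starRingEnd ℂ) (W' i) := by
    have e1 : (inner ℂ Z' Z' : ℂ) = inner ℂ W' W' := by
      rw [inner_self_eq_norm_sq_to_K, inner_self_eq_norm_sq_to_K, h4]
    rw [PiLp.inner_apply, PiLp.inner_apply] at e1
    simpa only [RCLike.inner_apply, mul_comm] using e1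
  have hWZ : (∑ i, W i * (starRingEnd ℂ) (Z i)) = 0 := by
    have := congrArg (starRingEnd ℂ) h1
    simpa [map_sum, mul_comm] using this
  set S : ℂ := ∑ i, Z i * (starRingEnd ℂ) (Z i) with hSdef
  have hSne : S ≠ 0 := by
    intro h0
    have hZ0 : Z = 0 := by
      have : (inner ℂ Z Z : ℂ) = 0 := by
        rw [PiLp.inner_apply]; simp only [RCLike.inner_apply]; rw [Finset.sum_congr rfl fun i _ => mul_comm (Z i) _]
        rw [hSdef] at h0
        calc (∑ i, (starRingEnd ℂ) (Z i) * Z i) = ∑ i, Z i * (starRingEnd ℂ) (Z i) := by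
              exact Finset.sum_congr rfl fun i _ => mul_comm _ _
          _ = 0 := h0
      exact inner_self_eq_zero.mp this
    apply hD
    rw [hDdef]
    simp [hZ0]
  -- expansion of the three inner products
  have expand : ∀ (P Q : EuclideanSpace ℂ (Fin n)) (p q r s : ℂ),
      (∀ k, P k = p * Z k + q * W k) → (∀ k, Q k = r * Z k + s * W k) →
      (∑ i, P i * (starRingEnd ℂ) (Q i)) =
        (p * (starRingEnd ℂ) r) * (∑ i, Z i * (starRingEnd ℂ) (Z i)) +
        (p * (starRingEnd ℂ) s) * (∑ i, Z i * (starRingEnd ℂ) (W i)) +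
        (q * (starRingEnd ℂ) r) * (∑ i, W i * (starRingEnd ℂ) (Z i)) +
        (q * (starRingEnd ℂ) s) * (∑ i, W i * (starRingEnd ℂ) (W i)) := by
    intro P Q p q r s hP hQ
    rw [Finset.mul_sum, Finset.mul_sum, Finset.mul_sum, Finset.mul_sum,
      ← Finset.sum_add_distrib, ← Finset.sum_add_distrib, ← Finset.sum_add_distrib]
    refine Finset.sum_congr rfl fun i _ => ?_
    rw [hP i, hQ i]
    simp only [map_add, map_mul]
    ring
  have eOff : a * (starRingEnd ℂ) c + b * (starRingEnd ℂ) d = 0 := by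
    have h3' := h3
    rw [expand Z' W' a b c d keyZ keyW, h1, hWZ, ← hS] at h3'
    have : (a * (starRingEnd ℂ) c + b * (starRingEnd ℂ) d) * S = 0 := by
      rw [hSdef]; linear_combination h3'
    exact (mul_eq_zero.mp this).resolve_right hSne
  have eNorm : (a * (starRingEnd ℂ) a + b * (starRingEnd ℂ) b) * S
      = (c * (starRingEnd ℂ) c + d * (starRingEnd ℂ) d) * S := by
    have h4' := hS'
    rw [expand Z' Z' a b a b keyZ keyZ, expand W' W' c d c d keyW keyW,
      h1, hWZ, ← hS] at h4'
    rw [hSdef]; linear_combination h4'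
  have eNorm' : (a * (starRingEnd ℂ) a + b * (starRingEnd ℂ) b)
      = (c * (starRingEnd ℂ) c + d * (starRingEnd ℂ) d) :=
    mul_right_cancel₀ hSne eNorm
  -- Lagrange identity: t * t' = |det|^2 + |off|^2 = 1
  have lagrange : (a * (starRingEnd ℂ) a + b * (starRingEnd ℂ) b) *
      (c * (starRingEnd ℂ) c + d * (starRingEnd ℂ) d) = 1 := by
    have eOffc : (starRingEnd ℂ) a * c + (starRingEnd ℂ) b * d = 0 := by
      have := congrArg (starRingEnd ℂ) eOff
      simpa using this
    calc (a * (starRingEnd ℂ) a + b * (starRingEnd ℂ) b) *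
        (c * (starRingEnd ℂ) c + d * (starRingEnd ℂ) d)
        = (a * d - b * c) * ((starRingEnd ℂ) a * (starRingEnd ℂ) d - (starRingEnd ℂ) b * (starRingEnd ℂ) c)
          + (a * (starRingEnd ℂ) c + b * (starRingEnd ℂ) d) * ((starRingEnd ℂ) a * c + (starRingEnd ℂ) b * d) := by ring
      _ = 1 := by rw [hdet, hdetc, eOff, eOffc]; ring
  have eOffc : c * (starRingEnd ℂ) a + d * (starRingEnd ℂ) b = 0 := by
    have := congrArg (starRingEnd ℂ) eOff
    simpa [mul_comm] using this
  have lagrange' : (c * (starRingEnd ℂ) c + d * (starRingEnd ℂ) d) *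
      (c * (starRingEnd ℂ) c + d * (starRingEnd ℂ) d) = 1 := by
    have h := lagrange; rw [eNorm'] at h; exact h
  have hT2 : c * (starRingEnd ℂ) c + d * (starRingEnd ℂ) d = 1 := by
    have hr : c * (starRingEnd ℂ) c + d * (starRingEnd ℂ) d
        = ((Complex.normSq c + Complex.normSq d : ℝ) : ℂ) := by
      rw [Complex.mul_conj, Complex.mul_conj]; push_cast; ring
    set r : ℝ := Complex.normSq c + Complex.normSq d with hrdef
    have hrr : (r : ℂ) * (r : ℂ) = 1 := by rw [← hr]; exact lagrange'
    have hrr' : r * r = 1 := by exact_mod_cast hrr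
    have hrpos : 0 ≤ r := add_nonneg (Complex.normSq_nonneg c) (Complex.normSq_nonneg d)
    have hr1 : r = 1 := by nlinarith
    rw [hr, hr1]; norm_num
  have hT1 : a * (starRingEnd ℂ) a + b * (starRingEnd ℂ) b = 1 := by
    rw [eNorm']; exact hT2
  refine ⟨!![a, b; c, d], ?_, ?_, ?_, ?_⟩
  · have hprod : (!![a, b; c, d] : Matrix (Fin 2) (Fin 2) ℂ) * (!![a, b; c, d]).conjTranspose
        = !![a * (starRingEnd ℂ) a + b * (starRingEnd ℂ) b, a * (starRingEnd ℂ) c + b * (starRingEnd ℂ) d;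
             c * (starRingEnd ℂ) a + d * (starRingEnd ℂ) b, c * (starRingEnd ℂ) c + d * (starRingEnd ℂ) d] := by
      ext i j
      fin_cases i <;> fin_cases j <;>
        simp [Matrix.mul_apply, Fin.sum_univ_two]
    rw [hprod, hT1, hT2, eOff, eOffc, ← Matrix.one_fin_two]
  · rw [Matrix.det_fin_two_of]; exact hdet
  · intro i; simpa using keyZ i
  · intro i; simpa using keyW i
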